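/- arXiv:2105.13019 — 3 statements merged into one kernel-verified Lean document; each statement's English description precedes it below -/
import Mathlib

section
/- Let $n \geq 1$ and $m \geq 0$ be integers, let $x \in \mathbb{R}$, and let $f : \mathbb{R} \to \mathbb{R}$ be $(n+2m+2)$-times continuously differentiable on a neighborhood of $x$. Then, as $h \to 0^+$, $$h^{-n}\sum_{j=0}^m\left(\int_{-1}^1 f(x+ht)\,P_{n+2j}(t)\,dt\right)\frac{P_{n+2j}^{(n)}(0)}{h_{n+2j}} = f^{(n)}(x) + (-1)^m\frac{\bigl|P_{n+2m+2}^{(n)}(0)\bigr|\,f^{(n+2m+2)}(x)}{\bigl|k_{n+2m+2}\bigr|\,(n+2m+2)!}\,h^{2m+2} + o(h^{2m+2}),$$ where $P_N^{(n)}$ denotes the $n$-th derivative of $P_N$, $h_N = \int_{-1}^1 P_N(t)^2\,dt = 2/(2N+1)$, and $k_N = 2^{-N}\binom{2N}{N}$ is the leading coefficient of $P_N$. -/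
open Real Filter Finset intervalIntegral Asymptotics

/-- Legendre polynomial of degree `n` (Rodrigues formula), the orthogonal polynomial
on `[-1,1]` with weight `1` normalized by `P n 1 = 1`. -/
noncomputable def legendreP (n : ℕ) : ℝ → ℝ :=
  fun x => (1 / ((2:ℝ) ^ n * (Nat.factorial n : ℝ))) *
    iteratedDeriv n (fun y : ℝ => (y ^ 2 - 1) ^ n) x

open Polynomial

noncomputable def pint (p : Polynomial ℝ) : ℝ := ∫ t in (-1:ℝ)..1, p.eval t

lemma pint_intble (p : Polynomial ℝ) : IntervalIntegrable (fun t => p.eval t) MeasureTheory.volume (-1:ℝ) 1 :=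
  (p.continuous_aeval).intervalIntegrable _ _

lemma pint_deriv (p : Polynomial ℝ) : pint (derivative p) = p.eval 1 - p.eval (-1) := by
  unfold pint
  rw [intervalIntegral.integral_eq_sub_of_hasDerivAt (f := fun x => p.eval x)
    (fun x _ => p.hasDerivAt x) (pint_intble (derivative p))]

lemma pint_add (p q : Polynomial ℝ) : pint (p + q) = pint p + pint q := by
  unfold pint
  simp only [eval_add]
  exact intervalIntegral.integral_add (pint_intble p) (pint_intble q)

lemma pint_C_mul (c : ℝ) (p : Polynomial ℝ) : pint (C c * p) = c * pint p := by
  unfold pint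
  simp only [eval_mul, eval_C]
  exact intervalIntegral.integral_const_mul c _

lemma pint_sum {s : Finset ℕ} (g : ℕ → Polynomial ℝ) :
    pint (∑ i ∈ s, g i) = ∑ i ∈ s, pint (g i) := by
  classical
  induction s using Finset.induction with
  | empty => simp [pint]
  | insert _ _ h ih => rw [Finset.sum_insert h, Finset.sum_insert h, pint_add, ih]

lemma pint_parts (p g : Polynomial ℝ) (h1 : g.eval 1 = 0) (h2 : g.eval (-1) = 0) :
    pint (p * derivative g) = - pint (derivative p * g) := by
  have h := pint_deriv (p * g)
  rw [derivative_mul, pint_add] at h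
  simp only [eval_mul, h1, h2, mul_zero, sub_zero] at h
  linarith

/-- The polynomial `(X²-1)^N`. -/
noncomputable def legW (N : ℕ) : Polynomial ℝ := (X ^ 2 - 1) ^ N

/-- `N`-th derivative of `legW N` (Rodrigues numerator). -/
noncomputable def legQ (N : ℕ) : Polynomial ℝ := derivative^[N] (legW N)

/-- The Legendre polynomial as a `Polynomial ℝ`. -/
noncomputable def legP (N : ℕ) : Polynomial ℝ :=
  C (1 / (2 ^ N * (Nat.factorial N : ℝ))) * legQ N

lemma iterate_derivative_factor (c : ℝ) (q : Polynomial ℝ) (N j : ℕ) (hj : j ≤ N) :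
    ∃ r : Polynomial ℝ, derivative^[j] ((X - C c) ^ N * q) = (X - C c) ^ (N - j) * r := by
  induction j with
  | zero => exact ⟨q, rfl⟩
  | succ j ih =>
    obtain ⟨r, hr⟩ := ih (le_of_lt (Nat.lt_of_succ_le hj))
    refine ⟨C ((N - j : ℕ) : ℝ) * r + (X - C c) * derivative r, ?_⟩
    rw [Function.iterate_succ_apply', hr, derivative_mul, derivative_pow]
    have hNj : N - j = (N - (j+1)) + 1 := by omega
    rw [hNj]
    push_cast
    ring_nf
    rw [derivative_sub, derivative_X, derivative_C]
    ring

lemma legW_iterate_eval_one (N j : ℕ) (hj : j < N) :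
    (derivative^[j] (legW N)).eval 1 = 0 := by
  have h : legW N = (X - C (1:ℝ)) ^ N * (X + 1) ^ N := by
    unfold legW
    rw [← mul_pow]; congr 1; simp only [map_one, map_neg]; ring
  obtain ⟨r, hr⟩ := iterate_derivative_factor 1 ((X + 1) ^ N) N j hj.le
  rw [h, hr]
  have : N - j ≠ 0 := by omega
  simp [this, sub_eq_zero, zero_pow this]

lemma legW_iterate_eval_negone (N j : ℕ) (hj : j < N) :
    (derivative^[j] (legW N)).eval (-1) = 0 := by
  have h : legW N = (X - C (-1:ℝ)) ^ N * (X - 1) ^ N := by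
    unfold legW
    rw [← mul_pow]; congr 1; simp only [map_one, map_neg]; ring
  obtain ⟨r, hr⟩ := iterate_derivative_factor (-1) ((X - 1) ^ N) N j hj.le
  rw [h, hr]
  have : N - j ≠ 0 := by omega
  simp [this, zero_pow this]

lemma pint_parts_iter (N : ℕ) : ∀ k, k ≤ N → ∀ a : Polynomial ℝ,
    pint (a * derivative^[k] (legW N)) = (-1) ^ k * pint (derivative^[k] a * legW N) := by
  intro k
  induction k with
  | zero => intro _ a; simp
  | succ k ih =>
    intro hk a
    have h1 : a * derivative^[k+1] (legW N) = a * derivative (derivative^[k] (legW N)) := by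
      rw [Function.iterate_succ_apply']
    rw [h1, pint_parts a _ (legW_iterate_eval_one N k (by omega))
      (legW_iterate_eval_negone N k (by omega)),
      ih (by omega) (derivative a)]
    rw [← Function.iterate_succ_apply]
    ring

lemma legW_eq_sum (N : ℕ) : legW N =
    ∑ i ∈ Finset.range (N+1), C ((-1:ℝ)^(N-i) * (N.choose i : ℝ)) * X^(2*i) := by
  unfold legW
  rw [sub_eq_add_neg, add_pow]
  refine Finset.sum_congr rfl fun i _ => ?_
  rw [← pow_mul]
  have h1 : ((-1 : Polynomial ℝ)) ^ (N - i) = C ((-1:ℝ)^(N-i)) := by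
    rw [map_pow, map_neg, map_one]
  have h2 : ((N.choose i : ℕ) : Polynomial ℝ) = C ((N.choose i : ℝ)) := by
    simp
  rw [h1, h2, mul_comm 2 i, map_mul]
  ring

lemma legW_coeff_even (N i : ℕ) (hi : i ≤ N) :
    (legW N).coeff (2*i) = (-1:ℝ)^(N-i) * (N.choose i : ℝ) := by
  rw [legW_eq_sum]
  rw [Polynomial.finset_sum_coeff]
  rw [Finset.sum_eq_single i]
  · rw [coeff_C_mul, coeff_X_pow, if_pos rfl, mul_one]
  · intro b _ hb
    rw [coeff_C_mul, coeff_X_pow, if_neg (by omega), mul_zero]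
  · intro h; exact absurd (Finset.mem_range.2 (by omega)) h

lemma legW_coeff_odd (N j : ℕ) (hj : ¬ 2 ∣ j) : (legW N).coeff j = 0 := by
  rw [legW_eq_sum, Polynomial.finset_sum_coeff]
  refine Finset.sum_eq_zero fun i _ => ?_
  rw [coeff_C_mul, coeff_X_pow, if_neg (by omega), mul_zero]

lemma legW_natDegree (N : ℕ) : (legW N).natDegree = 2*N := by
  unfold legW
  have h : (X^2 - 1 : Polynomial ℝ) = X^2 - C 1 := by simp
  rw [h, natDegree_pow, natDegree_X_pow_sub_C]
  ring

lemma legW_coeff_large (N j : ℕ) (hj : 2*N < j) : (legW N).coeff j = 0 :=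
  Polynomial.coeff_eq_zero_of_natDegree_lt (by rw [legW_natDegree]; omega)

lemma legQ_coeff (N j : ℕ) : (legQ N).coeff j =
    ((j+N).descFactorial N : ℝ) * (legW N).coeff (j+N) := by
  unfold legQ
  rw [Polynomial.coeff_iterate_derivative, nsmul_eq_mul]

lemma legQ_coeff_self (N : ℕ) :
    (legQ N).coeff N = (Nat.factorial N : ℝ) * ((2*N).choose N : ℝ) := by
  rw [legQ_coeff]
  have h1 : N + N = 2 * N := by ring
  rw [h1, legW_coeff_even N N le_rfl]
  simp [Nat.descFactorial_eq_factorial_mul_choose]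

lemma legQ_natDegree (N : ℕ) : (legQ N).natDegree = N := by
  have hne : (legQ N).coeff N ≠ 0 := by
    rw [legQ_coeff_self]
    exact mul_ne_zero (Nat.cast_ne_zero.mpr (Nat.factorial_ne_zero N))
      (Nat.cast_ne_zero.mpr (Nat.choose_pos (by omega)).ne')
  have hle : (legQ N).natDegree ≤ N := by
    rw [Polynomial.natDegree_le_iff_coeff_eq_zero]
    intro j hj
    rw [legQ_coeff, legW_coeff_large N (j+N) (by omega), mul_zero]
  exact le_antisymm hle (Polynomial.le_natDegree_of_ne_zero hne)

/-- Leading coefficient value. -/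
noncomputable def lc (N : ℕ) : ℝ := ((2*N).choose N : ℝ) / 2 ^ N

lemma lc_pos (N : ℕ) : 0 < lc N := by
  unfold lc
  have : 0 < ((2*N).choose N : ℝ) := by
    exact_mod_cast Nat.choose_pos (by omega)
  positivity

lemma legP_coeff (N j : ℕ) : (legP N).coeff j = (legQ N).coeff j / (2 ^ N * (Nat.factorial N : ℝ)) := by
  unfold legP
  rw [coeff_C_mul]
  field_simp

lemma legP_coeff_self (N : ℕ) : (legP N).coeff N = lc N := by
  rw [legP_coeff, legQ_coeff_self]
  unfold lc
  have h1 : (Nat.factorial N : ℝ) ≠ 0 := Nat.cast_ne_zero.mpr (Nat.factorial_ne_zero N)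
  field_simp

lemma legP_natDegree (N : ℕ) : (legP N).natDegree = N := by
  unfold legP
  rw [natDegree_C_mul, legQ_natDegree]
  have h1 : (Nat.factorial N : ℝ) ≠ 0 := Nat.cast_ne_zero.mpr (Nat.factorial_ne_zero N)
  positivity

lemma legP_coeff_gt (N j : ℕ) (h : N < j) : (legP N).coeff j = 0 :=
  Polynomial.coeff_eq_zero_of_natDegree_lt (by rw [legP_natDegree]; omega)

/-- The functional `p ↦ (dⁿp/dxⁿ)(0)`. -/
noncomputable def Lam (n : ℕ) (p : Polynomial ℝ) : ℝ := (derivative^[n] p).eval 0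

lemma Lam_eq (n : ℕ) (p : Polynomial ℝ) : Lam n p = (Nat.factorial n : ℝ) * p.coeff n := by
  unfold Lam
  rw [← Polynomial.coeff_zero_eq_eval_zero, Polynomial.coeff_iterate_derivative, zero_add,
    Nat.descFactorial_self, nsmul_eq_mul]

lemma legQ_coeff_parity (N j : ℕ) (h : ¬ 2 ∣ (j + N)) : (legQ N).coeff j = 0 := by
  rw [legQ_coeff, legW_coeff_odd N (j+N) h, mul_zero]

lemma legP_coeff_parity (N j : ℕ) (h : ¬ 2 ∣ (j + N)) : (legP N).coeff j = 0 := by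
  rw [legP_coeff, legQ_coeff_parity N j h, zero_div]

lemma legQ_coeff_neg_sign (n s : ℕ) :
    ∃ c : ℝ, 0 ≤ c ∧ (legQ (n + 2*s)).coeff n = (-1:ℝ)^s * c := by
  refine ⟨((n + (n+2*s)).descFactorial (n+2*s) : ℝ) * ((n+2*s).choose (n+s) : ℝ), by positivity, ?_⟩
  rw [legQ_coeff]
  have h1 : n + (n + 2*s) = 2 * (n + s) := by ring
  rw [h1, legW_coeff_even (n+2*s) (n+s) (by omega)]
  have h2 : n + 2*s - (n + s) = s := by omega
  rw [h2, ← h1]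
  ring

lemma pint_one : pint 1 = 2 := by
  unfold pint
  simp
  norm_num
-- real content follows

noncomputable def UU (N : ℕ) : ℝ := pint ((1 - X^2)^N)

lemma UU_zero : UU 0 = 2 := by simp [UU, pint_one]

lemma key_deriv (N : ℕ) : derivative (X * (1 - X^2)^(N+1)) =
    ((2*N+3 : ℕ) : Polynomial ℝ) * (1 - X^2)^(N+1) - ((2*N+2 : ℕ) : Polynomial ℝ) * (1 - X^2)^N := by
  rw [derivative_mul, derivative_X, derivative_pow]
  simp only [derivative_sub, derivative_one, derivative_pow, derivative_X, Polynomial.C_eq_natCast]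
  rw [pow_succ (1 - X^2 : Polynomial ℝ) N]
  push_cast
  ring

lemma UU_rec (N : ℕ) : (2*(N:ℝ)+3) * UU (N+1) = (2*(N:ℝ)+2) * UU N := by
  have h := pint_deriv (X * (1 - X^2)^(N+1))
  rw [key_deriv] at h
  have h2 : ((2*N+3 : ℕ) : Polynomial ℝ) * (1 - X^2)^(N+1) - ((2*N+2 : ℕ) : Polynomial ℝ) * (1 - X^2)^N
      = C ((2*N+3 : ℕ) : ℝ) * (1 - X^2)^(N+1) + C (-((2*N+2 : ℕ) : ℝ)) * (1 - X^2)^N := by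
    simp only [map_neg, Polynomial.C_eq_natCast]
    ring
  rw [h2, pint_add, pint_C_mul, pint_C_mul] at h
  simp only [eval_mul, eval_X, eval_pow, eval_sub, eval_one, one_pow, eval_ofNat] at h
  norm_num at h
  unfold UU
  push_cast at h ⊢
  linarith

lemma UU_closed (N : ℕ) : UU N = 2^(2*N+1) * ((N.factorial : ℝ))^2 / ((2*N+1).factorial : ℝ) := by
  induction N with
  | zero => simp [UU_zero, Nat.factorial]
  | succ N ih =>
    have hrec := UU_rec N
    have h3 : (0:ℝ) < 2*(N:ℝ)+3 := by positivity
    have hU : UU (N+1) = (2*(N:ℝ)+2) * UU N / (2*(N:ℝ)+3) := by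
      field_simp at hrec ⊢
      linarith
    rw [hU, ih]
    have hf1 : ((2*(N+1)+1).factorial : ℝ) = (2*(N:ℝ)+3) * ((2*(N:ℝ))+2) * ((2*N+1).factorial : ℝ) := by
      have : 2*(N+1)+1 = (2*N+2)+1 := by ring
      rw [this, Nat.factorial_succ]
      have : 2*N+2 = (2*N+1)+1 := by ring
      rw [this, Nat.factorial_succ]
      push_cast
      ring
    have hf2 : ((N+1).factorial : ℝ) = ((N:ℝ)+1) * (N.factorial : ℝ) := by
      rw [Nat.factorial_succ]; push_cast; ring
    rw [hf1, hf2]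
    have hfne : ((2*N+1).factorial : ℝ) ≠ 0 := Nat.cast_ne_zero.mpr (Nat.factorial_ne_zero _)
    field_simp
    push_cast
    ring

lemma pint_legW (N : ℕ) : pint (legW N) = (-1:ℝ)^N * UU N := by
  have h : legW N = C ((-1:ℝ)^N) * (1 - X^2)^N := by
    unfold legW
    rw [show (X^2 - 1 : Polynomial ℝ) = -1 * (1 - X^2) by ring, mul_pow]
    congr 1
    rw [map_pow, map_neg, map_one]
  rw [h, pint_C_mul, UU]

lemma iterate_derivative_of_natDegree_le (p : Polynomial ℝ) (N : ℕ) (hp : p.natDegree ≤ N) :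
    derivative^[N] p = C ((N.factorial : ℝ) * p.coeff N) := by
  ext j
  rw [Polynomial.coeff_iterate_derivative, coeff_C]
  rcases Nat.eq_zero_or_pos j with hj | hj
  · subst hj
    simp [Nat.descFactorial_self, nsmul_eq_mul]
  · rw [if_neg (by omega), Polynomial.coeff_eq_zero_of_natDegree_lt (by omega), smul_zero]

lemma pint_mul_legQ_eq_zero (a : Polynomial ℝ) (N : ℕ) (ha : a.natDegree < N) :
    pint (a * legQ N) = 0 := by
  unfold legQ
  rw [pint_parts_iter N N le_rfl a, Polynomial.iterate_derivative_eq_zero ha, zero_mul]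
  have : (0 : Polynomial ℝ) = C 0 * 1 := by simp
  rw [this, pint_C_mul, zero_mul, mul_zero]

lemma pint_mul_legP_eq_zero (a : Polynomial ℝ) (N : ℕ) (ha : a.natDegree < N) :
    pint (a * legP N) = 0 := by
  unfold legP
  rw [show a * (C (1 / (2 ^ N * (Nat.factorial N : ℝ))) * legQ N)
      = C (1 / (2 ^ N * (Nat.factorial N : ℝ))) * (a * legQ N) by ring,
    pint_C_mul, pint_mul_legQ_eq_zero a N ha, mul_zero]

lemma pint_legP_orth (M N : ℕ) (h : M ≠ N) : pint (legP M * legP N) = 0 := by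
  rcases lt_or_gt_of_ne h with hlt | hgt
  · exact pint_mul_legP_eq_zero (legP M) N (by rw [legP_natDegree]; omega)
  · rw [mul_comm]
    exact pint_mul_legP_eq_zero (legP N) M (by rw [legP_natDegree]; omega)

lemma pint_legP_sq (N : ℕ) : pint (legP N * legP N) = 2 / (2*(N:ℝ)+1) := by
  have hα : legP N * legP N = C (1 / (2 ^ N * (Nat.factorial N : ℝ))) * (legP N * legQ N) := by
    unfold legP; ring
  have heven : (-1:ℝ)^N * (-1:ℝ)^N = 1 := by
    rw [← pow_add]; exact Even.neg_one_pow ⟨N, rfl⟩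
  have hparts : pint (legP N * legQ N) = (Nat.factorial N : ℝ) * lc N * UU N := by
    unfold legQ
    rw [pint_parts_iter N N le_rfl (legP N),
      iterate_derivative_of_natDegree_le (legP N) N (le_of_eq (legP_natDegree N)),
      legP_coeff_self, pint_C_mul, pint_legW,
      show (-1:ℝ)^N * ((Nat.factorial N : ℝ) * lc N * ((-1:ℝ)^N * UU N))
        = ((-1:ℝ)^N * (-1:ℝ)^N) * ((Nat.factorial N : ℝ) * lc N * UU N) by ring,
      heven, one_mul]
  have hfac : (N.factorial : ℝ) ≠ 0 := Nat.cast_ne_zero.mpr (Nat.factorial_ne_zero _)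
  have hnat : (2*N).choose N * (N.factorial * N.factorial) = (2*N).factorial := by
    have h := Nat.choose_mul_factorial_mul_factorial (by omega : N ≤ 2*N)
    rw [show 2*N - N = N by omega] at h
    rw [← h]; ring
  have hchoose : ((2*N).choose N : ℝ)
      = ((2*N).factorial : ℝ) / ((N.factorial:ℝ) * (N.factorial:ℝ)) := by
    rw [eq_div_iff (by positivity)]
    exact_mod_cast hnat
  have hfacs : ((2*N+1).factorial : ℝ) = (2*(N:ℝ)+1) * ((2*N).factorial : ℝ) := by
    rw [Nat.factorial_succ]; push_cast; ring
  have hpow : (2:ℝ)^(2*N+1) = 2 * (2^N) * (2^N) := by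
    rw [pow_succ, two_mul, pow_add]; ring
  have h2N : ((2*N).factorial : ℝ) ≠ 0 := Nat.cast_ne_zero.mpr (Nat.factorial_ne_zero _)
  have h2N1 : (2*(N:ℝ)+1) ≠ 0 := by positivity
  rw [hα, pint_C_mul, hparts, UU_closed, lc, hchoose, hfacs, hpow]
  field_simp

lemma legP_zero : legP 0 = 1 := by
  unfold legP legQ legW
  simp

lemma legP_span : ∀ k : ℕ, ∀ p : Polynomial ℝ, p.natDegree ≤ k →
    ∃ d : ℕ → ℝ, p = ∑ N ∈ Finset.range (k+1), C (d N) * legP N := by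
  intro k
  induction k with
  | zero =>
    intro p hp
    refine ⟨fun _ => p.coeff 0, ?_⟩
    rw [Finset.sum_range_one, legP_zero, mul_one]
    exact Polynomial.eq_C_of_natDegree_le_zero hp
  | succ k ih =>
    intro p hp
    set α := p.coeff (k+1) / lc (k+1) with hα
    set q := p - C α * legP (k+1) with hq
    have hqdeg : q.natDegree ≤ k := by
      rw [Polynomial.natDegree_le_iff_coeff_eq_zero]
      intro j hj
      rcases eq_or_lt_of_le (Nat.succ_le_of_lt hj) with h1 | h1
      · rw [hq]
        simp only [Polynomial.coeff_sub, coeff_C_mul]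
        rw [← h1, legP_coeff_self, hα, div_mul_cancel₀ _ (ne_of_gt (lc_pos (k+1))), sub_self]
      · rw [hq]
        simp only [Polynomial.coeff_sub, coeff_C_mul]
        rw [Polynomial.coeff_eq_zero_of_natDegree_lt (lt_of_le_of_lt hp h1),
          legP_coeff_gt (k+1) j h1, mul_zero, sub_self]
    obtain ⟨d, hd⟩ := ih q hqdeg
    refine ⟨Function.update d (k+1) α, ?_⟩
    rw [Finset.sum_range_succ, Function.update_self]
    have hsame : ∑ N ∈ Finset.range (k+1), C (Function.update d (k+1) α N) * legP N
        = ∑ N ∈ Finset.range (k+1), C (d N) * legP N := by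
      refine Finset.sum_congr rfl fun N hN => ?_
      rw [Function.update_of_ne (by simp only [Finset.mem_range] at hN; omega)]
    rw [hsame, ← hd, hq]
    ring

lemma Lam_C_mul (n : ℕ) (c : ℝ) (p : Polynomial ℝ) : Lam n (C c * p) = c * Lam n p := by
  rw [Lam_eq, Lam_eq, coeff_C_mul]; ring

lemma Lam_sum (n : ℕ) (s : Finset ℕ) (g : ℕ → Polynomial ℝ) :
    Lam n (∑ i ∈ s, g i) = ∑ i ∈ s, Lam n (g i) := by
  simp only [Lam_eq, Polynomial.finset_sum_coeff, Finset.mul_sum]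

lemma pint_expansion (k : ℕ) (d : ℕ → ℝ) (p : Polynomial ℝ)
    (hp : p = ∑ N ∈ Finset.range (k+1), C (d N) * legP N) (j : ℕ) (hj : j < k+1) :
    pint (p * legP j) = d j * (2 / (2*(j:ℝ)+1)) := by
  rw [hp, Finset.sum_mul, pint_sum]
  rw [Finset.sum_eq_single j]
  · rw [show C (d j) * legP j * legP j = C (d j) * (legP j * legP j) by ring,
      pint_C_mul, pint_legP_sq]
  · intro N _ hN
    rw [show C (d N) * legP N * legP j = C (d N) * (legP N * legP j) by ring,
      pint_C_mul, pint_legP_orth N j hN, mul_zero]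
  · intro h; exact absurd (Finset.mem_range.2 hj) h

lemma X_pow_natDegree (k : ℕ) : (X^k : Polynomial ℝ).natDegree = k := by
  simp

lemma full_sum (n k D : ℕ) (hk : k < D) :
    ∑ N ∈ Finset.range D, pint (X^k * legP N) * (Lam n (legP N) / (2 / (2*(N:ℝ)+1)))
      = Lam n (X^k) := by
  obtain ⟨d, hd⟩ := legP_span k (X^k) (le_of_eq (X_pow_natDegree k))
  have hsplit : ∀ N ∈ Finset.range D, N ∉ Finset.range (k+1) →
      pint (X^k * legP N) * (Lam n (legP N) / (2 / (2*(N:ℝ)+1))) = 0 := by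
    intro N _ hN
    rw [Finset.mem_range, not_lt] at hN
    rw [pint_mul_legP_eq_zero _ N (by rw [X_pow_natDegree]; omega), zero_mul]
  rw [← Finset.sum_subset (Finset.range_subset_range.2 hk) hsplit]
  have hterm : ∀ N ∈ Finset.range (k+1),
      pint (X^k * legP N) * (Lam n (legP N) / (2 / (2*(N:ℝ)+1))) = d N * Lam n (legP N) := by
    intro N hN
    rw [pint_expansion k d (X^k) hd N (Finset.mem_range.1 hN)]
    have hpos : (0:ℝ) < 2 / (2*(N:ℝ)+1) := by positivity
    field_simp
  rw [Finset.sum_congr rfl hterm]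
  conv_rhs => rw [hd, Lam_sum]
  refine Finset.sum_congr rfl fun N _ => ?_
  rw [Lam_C_mul]

lemma full_sum_top (n D : ℕ) :
    ∑ N ∈ Finset.range D, pint (X^D * legP N) * (Lam n (legP N) / (2 / (2*(N:ℝ)+1)))
      = Lam n (X^D) - Lam n (legP D) / lc D := by
  obtain ⟨d, hd⟩ := legP_span D (X^D) (le_of_eq (X_pow_natDegree D))
  have hdD : d D = 1 / lc D := by
    have hc := congrArg (fun p => Polynomial.coeff p D) hd
    simp only [Polynomial.finset_sum_coeff, coeff_C_mul, Polynomial.coeff_X_pow, if_pos rfl] at hc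
    rw [Finset.sum_eq_single D] at hc
    · rw [legP_coeff_self] at hc
      norm_num at hc
      rw [eq_div_iff (ne_of_gt (lc_pos D))]
      linarith [hc]
    · intro N hN hne
      rw [legP_coeff_gt N D (by rw [Finset.mem_range] at hN; omega), mul_zero]
    · intro h; exact absurd (Finset.mem_range.2 (by omega)) h
  have hterm : ∀ N ∈ Finset.range D,
      pint (X^D * legP N) * (Lam n (legP N) / (2 / (2*(N:ℝ)+1))) = d N * Lam n (legP N) := by
    intro N hN
    rw [pint_expansion D d (X^D) hd N (by rw [Finset.mem_range] at hN; omega)]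
    have hpos : (0:ℝ) < 2 / (2*(N:ℝ)+1) := by positivity
    field_simp
  rw [Finset.sum_congr rfl hterm]
  have hLam : Lam n (X^D) = (∑ N ∈ Finset.range D, d N * Lam n (legP N)) + d D * Lam n (legP D) := by
    conv_lhs => rw [hd, Lam_sum]
    rw [Finset.sum_range_succ]
    congr 1
    · exact Finset.sum_congr rfl fun N _ => Lam_C_mul n (d N) (legP N)
    · exact Lam_C_mul n (d D) (legP D)
  rw [hLam, hdD]
  ring

lemma Lam_legP_vanish (n N : ℕ) (h : N < n ∨ ¬ 2 ∣ (n + N)) : Lam n (legP N) = 0 := by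
  rw [Lam_eq]
  rcases h with h | h
  · rw [legP_coeff_gt N n h, mul_zero]
  · rw [legP_coeff_parity N n h, mul_zero]

lemma sum_reduce (n m k : ℕ) :
    ∑ j ∈ Finset.range (m+1),
        pint (X^k * legP (n+2*j)) * (Lam n (legP (n+2*j)) / (2 / (2*((n:ℝ)+2*j)+1)))
      = ∑ N ∈ Finset.range (n+2*m+2),
          pint (X^k * legP N) * (Lam n (legP N) / (2 / (2*(N:ℝ)+1))) := by
  classical
  set g : ℕ → ℝ := fun N => pint (X^k * legP N) * (Lam n (legP N) / (2 / (2*(N:ℝ)+1))) with hg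
  have hinj : ∀ a ∈ Finset.range (m+1), ∀ b ∈ Finset.range (m+1), n+2*a = n+2*b → a = b := by
    intro a _ b _ h; omega
  have hLHS : ∑ j ∈ Finset.range (m+1),
      pint (X^k * legP (n+2*j)) * (Lam n (legP (n+2*j)) / (2 / (2*((n:ℝ)+2*j)+1)))
      = ∑ j ∈ Finset.range (m+1), g (n+2*j) := by
    refine Finset.sum_congr rfl fun j _ => ?_
    rw [hg]
    push_cast
    ring_nf
  rw [hLHS, ← Finset.sum_image hinj]
  refine Finset.sum_subset ?_ ?_
  · intro N hN
    simp only [Finset.mem_image, Finset.mem_range] at hN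
    obtain ⟨j, hj, rfl⟩ := hN
    exact Finset.mem_range.2 (by omega)
  · intro N hN hNS
    simp only [Finset.mem_image, Finset.mem_range, not_exists] at hNS hN
    have hvan : Lam n (legP N) = 0 := by
      apply Lam_legP_vanish
      by_cases h1 : N < n
      · exact Or.inl h1
      · right
        intro h2
        have h3 : 2 ∣ (N - n) := by omega
        obtain ⟨j, hj⟩ := h3
        exact hNS j ⟨by omega, by omega⟩
    rw [hg]
    simp only [hvan, zero_div, mul_zero]

lemma identity_I (n m k : ℕ) (hk : k < n+2*m+2) :
    ∑ j ∈ Finset.range (m+1),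
        pint (X^k * legP (n+2*j)) * (Lam n (legP (n+2*j)) / (2 / (2*((n:ℝ)+2*j)+1)))
      = if k = n then (n.factorial : ℝ) else 0 := by
  rw [sum_reduce, full_sum n k (n+2*m+2) hk, Lam_eq, Polynomial.coeff_X_pow]
  by_cases h : k = n
  · subst h; simp
  · rw [if_neg (fun hh => h hh.symm), if_neg h, mul_zero]

lemma identity_II (n m : ℕ) :
    ∑ j ∈ Finset.range (m+1),
        pint (X^(n+2*m+2) * legP (n+2*j)) * (Lam n (legP (n+2*j)) / (2 / (2*((n:ℝ)+2*j)+1)))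
      = - Lam n (legP (n+2*m+2)) / lc (n+2*m+2) := by
  rw [sum_reduce, full_sum_top n (n+2*m+2)]
  have h0 : Lam n (X^(n+2*m+2) : Polynomial ℝ) = 0 := by
    rw [Lam_eq, Polynomial.coeff_X_pow, if_neg (by omega), mul_zero]
  rw [h0]
  ring

lemma Lam_sign (n m : ℕ) :
    |Lam n (legP (n+2*m+2))| = (-1:ℝ)^(m+1) * Lam n (legP (n+2*m+2)) := by
  have h := legQ_coeff_neg_sign n (m+1)
  obtain ⟨c, hc0, hc⟩ := h
  have hKdef : n + 2*m + 2 = n + 2*(m+1) := by ring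
  set N := n + 2*(m+1) with hN
  have hval : Lam n (legP N) = (-1:ℝ)^(m+1) *
      ((n.factorial : ℝ) * c / (2^N * (N.factorial : ℝ))) := by
    rw [Lam_eq, legP_coeff, hc]
    ring
  have hpos : (0:ℝ) ≤ (n.factorial : ℝ) * c / (2^N * (N.factorial : ℝ)) := by
    have h1 : (0:ℝ) < 2^N * (N.factorial : ℝ) := by
      have : (0:ℝ) < (N.factorial : ℝ) := by exact_mod_cast Nat.factorial_pos N
      positivity
    positivity
  rw [hKdef, hval, abs_mul, abs_pow, abs_neg, abs_one, one_pow, one_mul,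
    abs_of_nonneg hpos,
    show ((-1:ℝ)^(m+1)) * ((-1:ℝ)^(m+1) * ((n.factorial : ℝ) * c / (2^N * (N.factorial : ℝ))))
      = ((-1:ℝ)^(m+1) * (-1:ℝ)^(m+1)) * ((n.factorial : ℝ) * c / (2^N * (N.factorial : ℝ))) by ring,
    show (-1:ℝ)^(m+1) * (-1:ℝ)^(m+1) = 1 by rw [← pow_add]; exact Even.neg_one_pow ⟨m+1, by ring⟩,
    one_mul]

lemma iteratedDeriv_polyeval (p : Polynomial ℝ) (k : ℕ) :
    iteratedDeriv k (fun y : ℝ => p.eval y) = fun y => (derivative^[k] p).eval y := by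
  induction k generalizing p with
  | zero => simp
  | succ k ih =>
    rw [iteratedDeriv_succ, ih p, Function.iterate_succ_apply']
    funext y
    exact Polynomial.deriv (p := derivative^[k] p)

lemma legendreP_eq (N : ℕ) : legendreP N = fun t => (legP N).eval t := by
  funext t
  unfold legendreP
  have h1 : (fun y : ℝ => (y^2-1)^N) = fun y => ((X^2-1 : Polynomial ℝ)^N).eval y := by
    funext y; simp
  rw [h1, iteratedDeriv_polyeval]
  unfold legP legQ legW
  rw [eval_mul, eval_C]

lemma legendreP_deriv_at0 (n N : ℕ) : iteratedDeriv n (legendreP N) 0 = Lam n (legP N) := by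
  rw [legendreP_eq, iteratedDeriv_polyeval]
  rfl

lemma legendreP_continuous (N : ℕ) : Continuous (legendreP N) := by
  rw [legendreP_eq]
  exact (legP N).continuous_aeval

lemma iteratedDerivWithin_isOpen_eq {U : Set ℝ} (hU : IsOpen U) (f : ℝ → ℝ) (k : ℕ) :
    Set.EqOn (iteratedDerivWithin k f U) (iteratedDeriv k f) U := by
  intro y hy
  rw [iteratedDerivWithin_eq_iteratedFDerivWithin, iteratedDeriv_eq_iteratedFDeriv,
    iteratedFDerivWithin_of_isOpen k hU hy]

lemma global_diff {U : Set ℝ} (hU : IsOpen U) {f : ℝ → ℝ} {K : ℕ}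
    (hf : ContDiffOn ℝ (K:ℕ∞) f U) {k : ℕ} (hk : k < K) :
    ∀ y ∈ U, DifferentiableAt ℝ (iteratedDeriv k f) y := by
  intro y hy
  have h1 : DifferentiableOn ℝ (iteratedDerivWithin k f U) U :=
    hf.differentiableOn_iteratedDerivWithin (by exact_mod_cast hk) hU.uniqueDiffOn
  have h2 : DifferentiableOn ℝ (iteratedDeriv k f) U :=
    h1.congr fun z hz => (iteratedDerivWithin_isOpen_eq hU f k hz).symm
  exact (h2 y hy).differentiableAt (hU.mem_nhds hy)

lemma global_cont {U : Set ℝ} (hU : IsOpen U) {f : ℝ → ℝ} {K : ℕ}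
    (hf : ContDiffOn ℝ (K:ℕ∞) f U) {k : ℕ} (hk : k ≤ K) :
    ∀ y ∈ U, ContinuousAt (iteratedDeriv k f) y := by
  intro y hy
  have h1 : ContinuousOn (iteratedDerivWithin k f U) U :=
    hf.continuousOn_iteratedDerivWithin (by exact_mod_cast hk) hU.uniqueDiffOn
  have h2 : ContinuousOn (iteratedDeriv k f) U :=
    h1.congr fun z hz => (iteratedDerivWithin_isOpen_eq hU f k hz).symm
  exact h2.continuousAt (hU.mem_nhds hy)

lemma iteratedDerivWithin_Icc_eq {U : Set ℝ} (hU : IsOpen U) {a b : ℝ} (hab : a < b)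
    (hsub : Set.Icc a b ⊆ U) {f : ℝ → ℝ} {K : ℕ} (hf : ContDiffOn ℝ (K:ℕ∞) f U) :
    ∀ k, k ≤ K → ∀ y ∈ Set.Icc a b, iteratedDerivWithin k f (Set.Icc a b) y = iteratedDeriv k f y := by
  intro k
  induction k with
  | zero => intro _ y _; simp
  | succ k ih =>
    intro hk y hy
    have hUD := uniqueDiffOn_Icc hab
    rw [iteratedDerivWithin_succ,
      derivWithin_congr (fun z hz => ih (by omega) z hz) (ih (by omega) y hy),
      (global_diff hU hf (show k < K by omega) y (hsub hy)).derivWithin (hUD y hy),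
      ← iteratedDeriv_succ]

lemma taylor_bound_right {f : ℝ → ℝ} {x ε : ℝ} {K : ℕ} (hK : 1 ≤ K)
    (hf : ContDiffOn ℝ (K:ℕ∞) f (Metric.ball x ε)) {c : ℝ}
    (hder : ∀ y ∈ Metric.ball x ε,
      |iteratedDeriv K f y - iteratedDeriv K f x| ≤ c * (K.factorial:ℝ))
    {u : ℝ} (hu0 : 0 < u) (huε : u < ε) :
    |f (x+u) - ∑ k ∈ Finset.range (K+1), iteratedDeriv k f x * u^k / (k.factorial:ℝ)|
      ≤ c * u^K := by
  have hab : x < x + u := by linarith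
  have hsub : Set.Icc x (x+u) ⊆ Metric.ball x ε := by
    intro y hy
    rw [Metric.mem_ball, Real.dist_eq]
    rcases hy with ⟨h1, h2⟩
    rw [abs_lt]
    constructor <;> linarith
  have hwithin := iteratedDerivWithin_Icc_eq Metric.isOpen_ball hab hsub hf
  have hfIcc : ContDiffOn ℝ ((K-1 : ℕ):ℕ∞) f (Set.Icc x (x+u)) :=
    (hf.of_le (by exact_mod_cast Nat.sub_le K 1)).mono hsub
  have hf' : DifferentiableOn ℝ (iteratedDerivWithin (K-1) f (Set.Icc x (x+u)))
      (Set.Ioo x (x+u)) := by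
    intro z hz
    have hz' : z ∈ Set.Icc x (x+u) := Set.Ioo_subset_Icc_self hz
    have hdiff : DifferentiableAt ℝ (iteratedDeriv (K-1) f) z :=
      global_diff Metric.isOpen_ball hf (by omega) z (hsub hz')
    refine hdiff.differentiableWithinAt.congr ?_ ?_
    · intro w hw
      exact hwithin (K-1) (by omega) w (Set.Ioo_subset_Icc_self hw)
    · exact hwithin (K-1) (by omega) z hz'
  obtain ⟨ξ, hξ, hL⟩ := taylor_mean_remainder_lagrange hab.ne
    (by rw [Set.uIcc_of_le hab.le]; exact hfIcc)
    (by rw [Set.uIcc_of_le hab.le, Set.uIoo_of_le hab.le]; exact hf')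
  rw [Set.uIoo_of_le hab.le] at hξ
  rw [Set.uIcc_of_le hab.le] at hL
  have hK1 : K - 1 + 1 = K := by omega
  rw [taylor_within_apply] at hL
  have hxmem : x ∈ Set.Icc x (x+u) := Set.left_mem_Icc.2 hab.le
  have hsum : ∑ k ∈ Finset.range ((K-1)+1),
      (((k.factorial:ℝ))⁻¹ * ((x+u) - x)^k) • iteratedDerivWithin k f (Set.Icc x (x+u)) x
      = ∑ k ∈ Finset.range K, iteratedDeriv k f x * u^k / (k.factorial:ℝ) := by
    rw [hK1]
    refine Finset.sum_congr rfl fun k hk => ?_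
    rw [hwithin k (by simp only [Finset.mem_range] at hk; omega) x hxmem, add_sub_cancel_left,
      smul_eq_mul]
    ring
  rw [hsum, hK1, hwithin K (by omega) ξ (Set.Ioo_subset_Icc_self hξ), add_sub_cancel_left] at hL
  have hmain : f (x+u) - ∑ k ∈ Finset.range (K+1), iteratedDeriv k f x * u^k / (k.factorial:ℝ)
      = (iteratedDeriv K f ξ - iteratedDeriv K f x) * u^K / (K.factorial:ℝ) := by
    rw [Finset.sum_range_succ, show ∀ A B C : ℝ, A - (B + C) = (A - B) - C by intros; ring, hL]
    ring
  rw [hmain]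
  have hfacpos : (0:ℝ) < (K.factorial:ℝ) := by exact_mod_cast Nat.factorial_pos K
  have hbd := hder ξ (hsub (Set.Ioo_subset_Icc_self hξ))
  rw [abs_div, abs_mul, abs_pow, abs_of_pos hu0, abs_of_pos hfacpos]
  rw [div_le_iff₀ hfacpos]
  calc |iteratedDeriv K f ξ - iteratedDeriv K f x| * u^K
      ≤ (c * (K.factorial:ℝ)) * u^K := by
        apply mul_le_mul_of_nonneg_right hbd (by positivity)
    _ = c * u^K * (K.factorial:ℝ) := by ring

lemma taylor_peano {f : ℝ → ℝ} {x ε : ℝ} (hε : 0 < ε) {K : ℕ} (hK : 1 ≤ K)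
    (hf : ContDiffOn ℝ (K:ℕ∞) f (Metric.ball x ε)) :
    ∀ c > (0:ℝ), ∃ δ > (0:ℝ), δ ≤ ε ∧ ∀ u : ℝ, |u| < δ →
      |f (x+u) - ∑ k ∈ Finset.range (K+1), iteratedDeriv k f x * u^k / (k.factorial:ℝ)|
        ≤ c * |u|^K := by
  intro c hc
  have hcK : (0:ℝ) < c * (K.factorial:ℝ) := by
    have : (0:ℝ) < (K.factorial:ℝ) := by exact_mod_cast Nat.factorial_pos K
    positivity
  have hcont : ContinuousAt (iteratedDeriv K f) x :=
    global_cont Metric.isOpen_ball hf le_rfl x (Metric.mem_ball_self hε)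
  rw [Metric.continuousAt_iff] at hcont
  obtain ⟨δ₁, hδ₁, hδ₁p⟩ := hcont (c * (K.factorial:ℝ)) hcK
  refine ⟨min δ₁ ε, lt_min hδ₁ hε, min_le_right _ _, ?_⟩
  intro u hu
  set ε₀ := min δ₁ ε with hε₀
  have hε₀pos : 0 < ε₀ := lt_min hδ₁ hε
  have hfball : ContDiffOn ℝ (K:ℕ∞) f (Metric.ball x ε₀) :=
    hf.mono (Metric.ball_subset_ball (min_le_right _ _))
  have hder : ∀ y ∈ Metric.ball x ε₀,
      |iteratedDeriv K f y - iteratedDeriv K f x| ≤ c * (K.factorial:ℝ) := by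
    intro y hy
    rw [Metric.mem_ball] at hy
    have := hδ₁p (lt_of_lt_of_le hy (min_le_left _ _))
    rw [Real.dist_eq] at this
    exact this.le
  rcases lt_trichotomy u 0 with hneg | hzero | hpos
  · -- reflection
    set g : ℝ → ℝ := fun v => f (2*x - v) with hg
    have hmap : Set.MapsTo (fun v : ℝ => 2*x - v) (Metric.ball x ε₀) (Metric.ball x ε₀) := by
      intro v hv
      rw [Metric.mem_ball, Real.dist_eq] at hv ⊢
      rw [show 2*x - v - x = -(v - x) by ring, abs_neg]
      exact hv
    have hgC : ContDiffOn ℝ (K:ℕ∞) g (Metric.ball x ε₀) :=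
      hfball.comp ((contDiff_const.sub contDiff_id).contDiffOn) hmap
    have hgder : ∀ k : ℕ, ∀ y : ℝ, iteratedDeriv k g y = (-1:ℝ)^k * iteratedDeriv k f (2*x - y) := by
      intro k y
      have h1 : g = fun v => (fun w => f (2*x + w)) (-v) := by
        funext v; simp [hg, sub_eq_add_neg]
      rw [h1, iteratedDeriv_comp_neg k (fun w => f (2*x + w)) y,
        iteratedDeriv_comp_const_add k f (2*x)]
      rw [smul_eq_mul, sub_eq_add_neg]
    have hb := taylor_bound_right hK hgC (c := c) (u := -u)
      (fun y hy => by
        rw [hgder K y, hgder K x, show 2*x - x = x by ring]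
        rw [show (-1:ℝ)^K * iteratedDeriv K f (2*x - y) - (-1:ℝ)^K * iteratedDeriv K f x
          = (-1:ℝ)^K * (iteratedDeriv K f (2*x - y) - iteratedDeriv K f x) by ring,
          abs_mul, abs_pow, abs_neg, abs_one, one_pow, one_mul]
        exact hder _ (hmap hy))
      (by linarith) (by rw [abs_of_neg hneg] at hu; linarith)
    have hgval : g (x + (-u)) = f (x + u) := by
      simp only [hg]; ring_nf
    have hsumeq : ∑ k ∈ Finset.range (K+1), iteratedDeriv k g x * (-u)^k / (k.factorial:ℝ)
        = ∑ k ∈ Finset.range (K+1), iteratedDeriv k f x * u^k / (k.factorial:ℝ) := by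
      refine Finset.sum_congr rfl fun k _ => ?_
      rw [hgder k x, show 2*x - x = x by ring, neg_pow u k]
      rw [show (-1:ℝ)^k * iteratedDeriv k f x * ((-1:ℝ)^k * u^k)
        = ((-1:ℝ)^k * (-1:ℝ)^k) * (iteratedDeriv k f x * u^k) by ring,
        show (-1:ℝ)^k * (-1:ℝ)^k = 1 by rw [← pow_add]; exact Even.neg_one_pow ⟨k, by ring⟩,
        one_mul]
    rw [hgval, hsumeq] at hb
    rw [abs_of_neg hneg]
    exact hb
  · subst hzero
    have hsum0 : ∑ k ∈ Finset.range (K+1), iteratedDeriv k f x * (0:ℝ)^k / (k.factorial:ℝ) = f x := by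
      rw [Finset.sum_eq_single 0]
      · simp
      · intro k _ hk
        rw [zero_pow hk, mul_zero, zero_div]
      · intro h; exact absurd (Finset.mem_range.2 (by omega)) h
    rw [hsum0, add_zero, sub_self, abs_zero]
    positivity
  · have hb := taylor_bound_right hK hfball hder hpos (by rw [abs_of_pos hpos] at hu; linarith)
    rw [abs_of_pos hpos]
    exact hb

lemma affine_maps_ball {x ε h : ℝ} (hh0 : 0 < h) (hhε : h < ε) :
    Set.MapsTo (fun t : ℝ => x + h*t) (Set.uIcc (-1:ℝ) 1) (Metric.ball x ε) := by
  intro t ht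
  rw [Set.uIcc_of_le (by norm_num : (-1:ℝ) ≤ 1)] at ht
  rw [Metric.mem_ball, Real.dist_eq, add_sub_cancel_left, abs_mul, abs_of_pos hh0]
  have h1 : |t| ≤ 1 := abs_le.2 ⟨ht.1, ht.2⟩
  calc h * |t| ≤ h * 1 := by nlinarith
    _ < ε := by linarith

lemma integral_split (f : ℝ → ℝ) (x ε h : ℝ) (K : ℕ)
    (hfc : ContinuousOn f (Metric.ball x ε)) (hh0 : 0 < h) (hhε : h < ε) (N : ℕ) :
    (∫ t in (-1:ℝ)..1, f (x + h*t) * legendreP N t)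
      = (∑ k ∈ Finset.range (K+1),
          (iteratedDeriv k f x / (k.factorial:ℝ)) * h^k * pint (X^k * legP N))
        + ∫ t in (-1:ℝ)..1,
            (f (x + h*t) - ∑ k ∈ Finset.range (K+1),
              iteratedDeriv k f x * (h*t)^k / (k.factorial:ℝ)) * (legP N).eval t := by
  have hcont1 : ContinuousOn (fun t : ℝ => f (x + h*t)) (Set.uIcc (-1:ℝ) 1) :=
    hfc.comp ((continuous_const.add (continuous_const.mul continuous_id)).continuousOn)
      (affine_maps_ball hh0 hhε)
  have hcontT : Continuous (fun t : ℝ => ∑ k ∈ Finset.range (K+1),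
      iteratedDeriv k f x * (h*t)^k / (k.factorial:ℝ)) := by
    apply continuous_finset_sum
    intro k _
    continuity
  have hcontP : Continuous (fun t : ℝ => (legP N).eval t) := (legP N).continuous_aeval
  have int1 : IntervalIntegrable (fun t => f (x + h*t) * legendreP N t)
      MeasureTheory.volume (-1:ℝ) 1 := by
    rw [legendreP_eq]
    exact (hcont1.mul hcontP.continuousOn).intervalIntegrable
  have int2 : IntervalIntegrable (fun t => (∑ k ∈ Finset.range (K+1),
      iteratedDeriv k f x * (h*t)^k / (k.factorial:ℝ)) * (legP N).eval t)
      MeasureTheory.volume (-1:ℝ) 1 :=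
    ((hcontT.mul hcontP).continuousOn).intervalIntegrable
  have int3 : IntervalIntegrable (fun t => (f (x + h*t) - ∑ k ∈ Finset.range (K+1),
      iteratedDeriv k f x * (h*t)^k / (k.factorial:ℝ)) * (legP N).eval t)
      MeasureTheory.volume (-1:ℝ) 1 :=
    (((hcont1.sub hcontT.continuousOn).mul hcontP.continuousOn)).intervalIntegrable
  have hsplit : (∫ t in (-1:ℝ)..1, f (x + h*t) * legendreP N t)
      = (∫ t in (-1:ℝ)..1, (∑ k ∈ Finset.range (K+1),
          iteratedDeriv k f x * (h*t)^k / (k.factorial:ℝ)) * (legP N).eval t)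
        + ∫ t in (-1:ℝ)..1, (f (x + h*t) - ∑ k ∈ Finset.range (K+1),
            iteratedDeriv k f x * (h*t)^k / (k.factorial:ℝ)) * (legP N).eval t := by
    rw [← intervalIntegral.integral_add int2 int3]
    rw [legendreP_eq]
    apply intervalIntegral.integral_congr
    intro t _
    ring
  rw [hsplit]
  congr 1
  have hterm : ∀ t : ℝ, (∑ k ∈ Finset.range (K+1),
      iteratedDeriv k f x * (h*t)^k / (k.factorial:ℝ)) * (legP N).eval t
      = ∑ k ∈ Finset.range (K+1),
        (iteratedDeriv k f x / (k.factorial:ℝ)) * h^k * (t^k * (legP N).eval t) := by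
    intro t
    rw [Finset.sum_mul]
    refine Finset.sum_congr rfl fun k _ => ?_
    rw [mul_pow]
    ring
  rw [intervalIntegral.integral_congr (g := fun t => ∑ k ∈ Finset.range (K+1),
      (iteratedDeriv k f x / (k.factorial:ℝ)) * h^k * (t^k * (legP N).eval t))
      (fun t _ => hterm t)]
  rw [intervalIntegral.integral_finset_sum]
  · refine Finset.sum_congr rfl fun k _ => ?_
    rw [intervalIntegral.integral_const_mul]
    congr 1
    unfold pint
    apply intervalIntegral.integral_congr
    intro t _
    simp [eval_mul, eval_pow]
  · intro k _
    apply Continuous.intervalIntegrable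
    continuity

lemma sum_eval (n m : ℕ) (f : ℝ → ℝ) (x ε h : ℝ)
    (hfc : ContinuousOn f (Metric.ball x ε)) (hh0 : 0 < h) (hhε : h < ε) :
    ∑ j ∈ Finset.range (m+1),
        (∫ t in (-1:ℝ)..1, f (x + h*t) * legendreP (n + 2*j) t) *
          (iteratedDeriv n (legendreP (n + 2*j)) 0 / (2 / (2*((n:ℝ) + 2*j) + 1)))
      = iteratedDeriv n f x * h^n
        + (iteratedDeriv (n+2*m+2) f x / ((n+2*m+2).factorial:ℝ)) * h^(n+2*m+2)
            * (- Lam n (legP (n+2*m+2)) / lc (n+2*m+2))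
        + ∑ j ∈ Finset.range (m+1),
            (∫ t in (-1:ℝ)..1,
              (f (x + h*t) - ∑ k ∈ Finset.range ((n+2*m+2)+1),
                iteratedDeriv k f x * (h*t)^k / (k.factorial:ℝ)) * (legP (n+2*j)).eval t) *
              (Lam n (legP (n+2*j)) / (2 / (2*((n:ℝ) + 2*j) + 1))) := by
  set K := n + 2*m + 2 with hKdef
  have hstep : ∀ j ∈ Finset.range (m+1),
      (∫ t in (-1:ℝ)..1, f (x + h*t) * legendreP (n + 2*j) t) *
          (iteratedDeriv n (legendreP (n + 2*j)) 0 / (2 / (2*((n:ℝ) + 2*j) + 1)))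
      = (∑ k ∈ Finset.range (K+1),
          (iteratedDeriv k f x / (k.factorial:ℝ)) * h^k *
            (pint (X^k * legP (n+2*j)) * (Lam n (legP (n+2*j)) / (2 / (2*((n:ℝ) + 2*j) + 1)))))
        + (∫ t in (-1:ℝ)..1,
            (f (x + h*t) - ∑ k ∈ Finset.range (K+1),
              iteratedDeriv k f x * (h*t)^k / (k.factorial:ℝ)) * (legP (n+2*j)).eval t) *
            (Lam n (legP (n+2*j)) / (2 / (2*((n:ℝ) + 2*j) + 1))) := by
    intro j _
    rw [integral_split f x ε h K hfc hh0 hhε (n+2*j), legendreP_deriv_at0]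
    rw [add_mul, Finset.sum_mul]
    congr 1
    refine Finset.sum_congr rfl fun k _ => ?_
    ring
  rw [Finset.sum_congr rfl hstep, Finset.sum_add_distrib]
  congr 1
  rw [Finset.sum_comm]
  have hinner : ∀ k ∈ Finset.range (K+1),
      ∑ j ∈ Finset.range (m+1),
        (iteratedDeriv k f x / (k.factorial:ℝ)) * h^k *
          (pint (X^k * legP (n+2*j)) * (Lam n (legP (n+2*j)) / (2 / (2*((n:ℝ) + 2*j) + 1))))
      = (iteratedDeriv k f x / (k.factorial:ℝ)) * h^k *
          ∑ j ∈ Finset.range (m+1),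
            pint (X^k * legP (n+2*j)) * (Lam n (legP (n+2*j)) / (2 / (2*((n:ℝ) + 2*j) + 1))) := by
    intro k _
    rw [Finset.mul_sum]
  rw [Finset.sum_congr rfl hinner, Finset.sum_range_succ]
  congr 1
  · have hI : ∀ k ∈ Finset.range K,
        (iteratedDeriv k f x / (k.factorial:ℝ)) * h^k *
          (∑ j ∈ Finset.range (m+1),
            pint (X^k * legP (n+2*j)) * (Lam n (legP (n+2*j)) / (2 / (2*((n:ℝ) + 2*j) + 1))))
        = if k = n then iteratedDeriv n f x * h^n else 0 := by
      intro k hk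
      rw [identity_I n m k (Finset.mem_range.1 hk)]
      by_cases hkn : k = n
      · subst hkn
        rw [if_pos rfl, if_pos rfl]
        have : (k.factorial:ℝ) ≠ 0 := Nat.cast_ne_zero.mpr (Nat.factorial_ne_zero k)
        field_simp
      · rw [if_neg hkn, if_neg hkn, mul_zero]
    rw [Finset.sum_congr rfl hI, Finset.sum_ite_eq' (Finset.range K) n
      (fun _ => iteratedDeriv n f x * h^n), if_pos (Finset.mem_range.2 (by omega))]
  · rw [identity_II n m]

theorem stmt0 (n m : ℕ) (hn : 1 ≤ n) (x : ℝ) (f : ℝ → ℝ)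
    (hf : ∃ ε > (0:ℝ), ContDiffOn ℝ ((n + 2*m + 2 : ℕ) : ℕ∞) f (Metric.ball x ε)) :
    (fun h : ℝ =>
        h ^ (-(n:ℤ)) * ∑ j ∈ Finset.range (m+1),
          (∫ t in (-1:ℝ)..1, f (x + h*t) * legendreP (n + 2*j) t) *
            (iteratedDeriv n (legendreP (n + 2*j)) 0 / (2 / (2*((n:ℝ) + 2*j) + 1)))
        - iteratedDeriv n f x
        - (-1:ℝ)^m *
            (|iteratedDeriv n (legendreP (n + 2*m + 2)) 0| *
              iteratedDeriv (n + 2*m + 2) f x /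
              (|(Nat.choose (2*(n + 2*m + 2)) (n + 2*m + 2) : ℝ) / 2 ^ (n + 2*m + 2)| *
                (Nat.factorial (n + 2*m + 2) : ℝ))) * h ^ (2*m + 2))
      =o[nhdsWithin (0:ℝ) (Set.Ioi 0)] (fun h : ℝ => h ^ (2*m + 2)) := by
  classical
  obtain ⟨ε, hε, hf⟩ := hf
  have hfc : ContinuousOn f (Metric.ball x ε) := hf.continuousOn
  have hB : ∀ j : ℕ, ∃ B : ℝ, 0 ≤ B ∧ ∀ t ∈ Set.uIoc (-1:ℝ) 1, |(legP (n+2*j)).eval t| ≤ B := by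
    intro j
    obtain ⟨B, hBB⟩ := (isCompact_Icc (a := (-1:ℝ)) (b := 1)).exists_bound_of_continuousOn
      ((legP (n+2*j)).continuous_aeval.continuousOn)
    refine ⟨max B 0, le_max_right _ _, fun t ht => ?_⟩
    have htI : t ∈ Set.Icc (-1:ℝ) 1 := by
      rw [Set.uIoc_of_le (by norm_num : (-1:ℝ) ≤ 1)] at ht
      exact ⟨ht.1.le, ht.2⟩
    calc |(legP (n+2*j)).eval t| ≤ B := by
          have := hBB t htI
          rwa [Real.norm_eq_abs] at this
      _ ≤ max B 0 := le_max_left _ _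
  choose B hB0 hBb using hB
  set CC := (∑ j ∈ Finset.range (m+1),
      2 * B j * |Lam n (legP (n+2*j)) / (2 / (2*((n:ℝ) + 2*j) + 1))|) + 1 with hCC
  have hsum_nonneg : 0 ≤ ∑ j ∈ Finset.range (m+1),
      2 * B j * |Lam n (legP (n+2*j)) / (2 / (2*((n:ℝ) + 2*j) + 1))| :=
    Finset.sum_nonneg fun j _ =>
      mul_nonneg (mul_nonneg (by norm_num) (hB0 j)) (abs_nonneg _)
  have hCCpos : 0 < CC := by rw [hCC]; linarith
  rw [Asymptotics.isLittleO_iff]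
  intro c hc
  obtain ⟨δ, hδpos, hδε, hδ⟩ := taylor_peano hε (show 1 ≤ n+2*m+2 by omega) hf (c / CC)
    (by positivity)
  have hmem : Set.Ioo (0:ℝ) δ ∈ nhdsWithin (0:ℝ) (Set.Ioi 0) :=
    Ioo_mem_nhdsGT_of_mem ⟨le_rfl, hδpos⟩
  filter_upwards [hmem] with h hh
  obtain ⟨hh0, hhδ⟩ := hh
  have hhε : h < ε := lt_of_lt_of_le hhδ hδε
  rw [sum_eval n m f x ε h hfc hh0 hhε]
  have hlcpos := lc_pos (n+2*m+2)
  have hfacne : ((n+2*m+2).factorial : ℝ) ≠ 0 := Nat.cast_ne_zero.mpr (Nat.factorial_ne_zero _)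
  have hSterm : (-1:ℝ)^m *
      (|iteratedDeriv n (legendreP (n + 2*m + 2)) 0| *
        iteratedDeriv (n + 2*m + 2) f x /
        (|(Nat.choose (2*(n + 2*m + 2)) (n + 2*m + 2) : ℝ) / 2 ^ (n + 2*m + 2)| *
          (Nat.factorial (n + 2*m + 2) : ℝ)))
      = (iteratedDeriv (n+2*m+2) f x / ((n+2*m+2).factorial:ℝ))
          * (- Lam n (legP (n+2*m+2)) / lc (n+2*m+2)) := by
    have habs : |(Nat.choose (2*(n + 2*m + 2)) (n + 2*m + 2) : ℝ) / 2 ^ (n + 2*m + 2)|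
        = lc (n+2*m+2) := by
      rw [show (Nat.choose (2*(n + 2*m + 2)) (n + 2*m + 2) : ℝ) / 2 ^ (n + 2*m + 2)
        = lc (n+2*m+2) from rfl]
      exact abs_of_pos hlcpos
    rw [legendreP_deriv_at0, Lam_sign n m, habs]
    have hm1 : (-1:ℝ)^m * (-1:ℝ)^(m+1) = -1 := by
      rw [← pow_add]
      exact Odd.neg_one_pow ⟨m, by ring⟩
    calc (-1:ℝ)^m * ((-1:ℝ)^(m+1) * Lam n (legP (n+2*m+2)) * iteratedDeriv (n+2*m+2) f x /
            (lc (n+2*m+2) * ((n+2*m+2).factorial : ℝ)))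
        = ((-1:ℝ)^m * (-1:ℝ)^(m+1)) * (Lam n (legP (n+2*m+2)) * iteratedDeriv (n+2*m+2) f x /
            (lc (n+2*m+2) * ((n+2*m+2).factorial : ℝ))) := by ring
      _ = (-1) * (Lam n (legP (n+2*m+2)) * iteratedDeriv (n+2*m+2) f x /
            (lc (n+2*m+2) * ((n+2*m+2).factorial : ℝ))) := by rw [hm1]
      _ = iteratedDeriv (n+2*m+2) f x / ((n+2*m+2).factorial:ℝ)
            * (- Lam n (legP (n+2*m+2)) / lc (n+2*m+2)) := by ring
  rw [hSterm]
  have hzpow : h ^ (-(n:ℤ)) = ((h:ℝ)^n)⁻¹ := by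
    rw [zpow_neg, zpow_natCast]
  rw [hzpow]
  have hhn : (0:ℝ) < h^n := pow_pos hh0 n
  have hne : (h:ℝ)^n ≠ 0 := ne_of_gt hhn
  set Esum := ∑ j ∈ Finset.range (m+1),
      (∫ t in (-1:ℝ)..1,
        (f (x + h*t) - ∑ k ∈ Finset.range ((n+2*m+2)+1),
          iteratedDeriv k f x * (h*t)^k / (k.factorial:ℝ)) * (legP (n+2*j)).eval t) *
        (Lam n (legP (n+2*j)) / (2 / (2*((n:ℝ) + 2*j) + 1))) with hEsum
  have hsplit2 : h^(n+2*m+2) = h^n * h^(2*m+2) := by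
    rw [show n+2*m+2 = n+(2*m+2) by ring, pow_add]
  have hgoalEq : ((h:ℝ)^n)⁻¹ * (iteratedDeriv n f x * h^n
        + (iteratedDeriv (n+2*m+2) f x / ((n+2*m+2).factorial:ℝ)) * h^(n+2*m+2)
            * (- Lam n (legP (n+2*m+2)) / lc (n+2*m+2)) + Esum)
      - iteratedDeriv n f x
      - (iteratedDeriv (n+2*m+2) f x / ((n+2*m+2).factorial:ℝ))
          * (- Lam n (legP (n+2*m+2)) / lc (n+2*m+2)) * h^(2*m+2)
      = ((h:ℝ)^n)⁻¹ * Esum := by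
    rw [hsplit2]
    field_simp
    ring
  rw [hgoalEq]
  -- now bound the remainder
  have hEj : ∀ j ∈ Finset.range (m+1),
      |∫ t in (-1:ℝ)..1,
        (f (x + h*t) - ∑ k ∈ Finset.range ((n+2*m+2)+1),
          iteratedDeriv k f x * (h*t)^k / (k.factorial:ℝ)) * (legP (n+2*j)).eval t|
      ≤ (c/CC * h^(n+2*m+2) * B j) * 2 := by
    intro j _
    have hb := intervalIntegral.norm_integral_le_of_norm_le_const
      (C := c/CC * h^(n+2*m+2) * B j)
      (f := fun t => (f (x + h*t) - ∑ k ∈ Finset.range ((n+2*m+2)+1),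
          iteratedDeriv k f x * (h*t)^k / (k.factorial:ℝ)) * (legP (n+2*j)).eval t)
      (a := (-1:ℝ)) (b := 1) ?_
    · rw [Real.norm_eq_abs] at hb
      calc |∫ t in (-1:ℝ)..1, _| ≤ (c/CC * h^(n+2*m+2) * B j) * |1 - (-1:ℝ)| := hb
        _ = (c/CC * h^(n+2*m+2) * B j) * 2 := by norm_num
    · intro t ht
      have ht1 : |t| ≤ 1 := by
        rw [Set.uIoc_of_le (by norm_num : (-1:ℝ) ≤ 1)] at ht
        exact abs_le.2 ⟨ht.1.le, ht.2⟩
      have hut : |h*t| ≤ h := by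
        rw [abs_mul, abs_of_pos hh0]
        nlinarith
      have hR := hδ (h*t) (lt_of_le_of_lt hut hhδ)
      have hRK : |h*t|^(n+2*m+2) ≤ h^(n+2*m+2) :=
        pow_le_pow_left₀ (abs_nonneg _) hut _
      have hφ := hBb j t ht
      rw [Real.norm_eq_abs, abs_mul]
      calc |f (x + h*t) - ∑ k ∈ Finset.range ((n+2*m+2)+1),
            iteratedDeriv k f x * (h*t)^k / (k.factorial:ℝ)| * |(legP (n+2*j)).eval t|
          ≤ (c/CC * h^(n+2*m+2)) * B j := by
            apply mul_le_mul _ hφ (abs_nonneg _) (by positivity)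
            calc |f (x + h*t) - _| ≤ c/CC * |h*t|^(n+2*m+2) := hR
              _ ≤ c/CC * h^(n+2*m+2) := by
                  apply mul_le_mul_of_nonneg_left hRK (by positivity)
        _ = c/CC * h^(n+2*m+2) * B j := by ring
  have hEsumB : |Esum| ≤ c/CC * h^(n+2*m+2) * (CC - 1) := by
    rw [hEsum]
    calc |∑ j ∈ Finset.range (m+1), _| ≤ ∑ j ∈ Finset.range (m+1),
          |(∫ t in (-1:ℝ)..1,
            (f (x + h*t) - ∑ k ∈ Finset.range ((n+2*m+2)+1),
              iteratedDeriv k f x * (h*t)^k / (k.factorial:ℝ)) * (legP (n+2*j)).eval t) *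
            (Lam n (legP (n+2*j)) / (2 / (2*((n:ℝ) + 2*j) + 1)))| :=
        Finset.abs_sum_le_sum_abs _ _
      _ ≤ ∑ j ∈ Finset.range (m+1),
          ((c/CC * h^(n+2*m+2) * B j) * 2) * |Lam n (legP (n+2*j)) / (2 / (2*((n:ℝ) + 2*j) + 1))| := by
        refine Finset.sum_le_sum fun j hj => ?_
        rw [abs_mul]
        exact mul_le_mul_of_nonneg_right (hEj j hj) (abs_nonneg _)
      _ = c/CC * h^(n+2*m+2) * ∑ j ∈ Finset.range (m+1),
          2 * B j * |Lam n (legP (n+2*j)) / (2 / (2*((n:ℝ) + 2*j) + 1))| := by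
        rw [Finset.mul_sum]
        exact Finset.sum_congr rfl fun j _ => by ring
      _ = c/CC * h^(n+2*m+2) * (CC - 1) := by
        have hCC1 : CC - 1 = ∑ j ∈ Finset.range (m+1),
            2 * B j * |Lam n (legP (n+2*j)) / (2 / (2*((n:ℝ) + 2*j) + 1))| := by
          rw [hCC]; ring
        rw [hCC1]
  calc ‖((h:ℝ)^n)⁻¹ * Esum‖ = ((h:ℝ)^n)⁻¹ * |Esum| := by
        rw [Real.norm_eq_abs, abs_mul, abs_inv, abs_pow, abs_of_pos hh0]
    _ ≤ ((h:ℝ)^n)⁻¹ * (c/CC * h^(n+2*m+2) * (CC - 1)) :=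
        mul_le_mul_of_nonneg_left hEsumB (by positivity)
    _ = c * h^(2*m+2) * ((CC-1)/CC) := by
        rw [hsplit2]
        field_simp
    _ ≤ c * h^(2*m+2) := by
        have hle1 : (CC-1)/CC ≤ 1 := (div_le_one hCCpos).mpr (by linarith)
        have hnn : 0 ≤ c * h^(2*m+2) := by positivity
        nlinarith
    _ = c * ‖h^(2*m+2)‖ := by
        rw [Real.norm_eq_abs, abs_of_pos (pow_pos hh0 _)]
end

section
/- Let $n \geq 0$ and $j \geq 0$ be integers. The value at $0$ of the $n$-th derivative of the Legendre polynomial of degree $n+2j$ is $$P_{n+2j}^{(n)}(0) = (n+2j+1)_n\,\frac{(-1)^j}{2^{2j+n}}\binom{2j+n}{j},$$ where $(a)_k = a(a+1)\cdots(a+k-1)$ is the Pochhammer symbol. -/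
open Real Filter Finset

noncomputable def poch (a : ℝ) (k : ℕ) : ℝ := (ascPochhammer ℝ k).eval a

open Polynomial in
lemma iteratedDeriv_polyEval (p : ℝ[X]) (k : ℕ) :
    iteratedDeriv k (fun x : ℝ => p.eval x) = fun x => (derivative^[k] p).eval x := by
  induction k with
  | zero => simp
  | succ k ih =>
    rw [iteratedDeriv_succ, ih, Function.iterate_succ_apply']
    funext x
    exact Polynomial.deriv _

open Polynomial in
lemma coeff_sq_sub_one_pow (N m : ℕ) (hm : m ≤ N) :
    (((X : ℝ[X]) ^ 2 - 1) ^ N).coeff (2 * m) = (-1 : ℝ) ^ (m + N) * N.choose m := by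
  have hterm : ∀ b : ℕ, ((-1 : ℝ[X]) ^ (b + N) * ((X : ℝ[X]) ^ 2) ^ b * 1 ^ (N - b)
      * (N.choose b : ℝ[X]))
      = Polynomial.C ((-1:ℝ) ^ (b + N) * (N.choose b : ℝ)) * X ^ (2 * b) := by
    intro b
    rw [map_mul, map_pow, Polynomial.C_neg, Polynomial.C_1, ← pow_mul,
      Polynomial.C_eq_natCast]
    ring
  rw [sub_pow]
  rw [Finset.sum_congr rfl fun b _ => hterm b]
  rw [finset_sum_coeff]
  simp only [Polynomial.coeff_C_mul, Polynomial.coeff_X_pow]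
  rw [Finset.sum_eq_single m]
  · simp
  · intro b _ hb
    have h2 : (2 * m ≠ 2 * b) := by omega
    simp [h2]
  · intro h
    exact absurd (Finset.mem_range.2 (by omega)) h

theorem stmt5 (n j : ℕ) :
    iteratedDeriv n (legendreP (n + 2*j)) 0 =
      poch ((n:ℝ) + 2*(j:ℝ) + 1) n * ((-1:ℝ)^j / (2:ℝ)^(2*j + n)) *
        (Nat.choose (2*j + n) j : ℝ) := by
  classical
  set N := n + 2 * j with hN
  clear_value N
  have hleg : legendreP N = fun x =>
      (Polynomial.C (1 / ((2:ℝ) ^ N * (Nat.factorial N : ℝ))) *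
        Polynomial.derivative^[N] (((Polynomial.X : Polynomial ℝ) ^ 2 - 1) ^ N)).eval x := by
    funext x
    have h : (fun y : ℝ => (y ^ 2 - 1) ^ N) =
        fun y : ℝ => ((((Polynomial.X : Polynomial ℝ) ^ 2 - 1) ^ N)).eval y := by
      funext y; simp
    simp only [legendreP, h, iteratedDeriv_polyEval]
    simp
  rw [hleg, iteratedDeriv_polyEval]
  rw [Polynomial.iterate_derivative_C_mul]
  rw [← Function.iterate_add_apply]
  have heval : (Polynomial.derivative^[n + N]
      (((Polynomial.X : Polynomial ℝ) ^ 2 - 1) ^ N)).eval 0 =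
      (((n + N).factorial : ℕ) : ℝ) * ((-1 : ℝ) ^ j * (N.choose (n + j) : ℝ)) := by
    rw [← Polynomial.coeff_zero_eq_eval_zero, Polynomial.coeff_iterate_derivative, zero_add,
      show n + N = 2 * (n + j) by omega, coeff_sq_sub_one_pow N (n + j) (by omega),
      Nat.descFactorial_self, nsmul_eq_mul]
    have hpar : (-1 : ℝ) ^ (n + j + N) = (-1 : ℝ) ^ j := by
      rw [show n + j + N = j + 2 * (n + j) by omega, pow_add, pow_mul]
      simp
    rw [hpar]
  simp only [Polynomial.eval_mul, Polynomial.eval_C, heval]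
  have hpoch : poch ((n:ℝ) + 2*(j:ℝ) + 1) n = (((N+1).ascFactorial n : ℕ) : ℝ) := by
    have hc : ((n:ℝ) + 2*(j:ℝ) + 1) = (((N+1 : ℕ) : ℕ) : ℝ) := by
      rw [hN]; push_cast; ring
    rw [poch, hc, ← ascPochhammer_eval_cast, ascPochhammer_nat_eq_ascFactorial]
  have hfac : ((N.factorial : ℕ) : ℝ) * (((N+1).ascFactorial n : ℕ) : ℝ)
      = (((n + N).factorial : ℕ) : ℝ) := by
    rw [show n + N = N + n by omega]
    exact_mod_cast congrArg Nat.cast (Nat.factorial_mul_ascFactorial N n)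
  have hch : N.choose (n+j) = N.choose j := by
    rw [show n+j = N - j by omega, Nat.choose_symm (by omega)]
  rw [hpoch, hch, show 2*j+n = N by omega]
  have h2 : ((2:ℝ)^N) ≠ 0 := by positivity
  have h3 : ((N.factorial : ℕ) : ℝ) ≠ 0 := by exact_mod_cast N.factorial_ne_zero
  field_simp
  linear_combination (-(N.choose j : ℝ)) * hfac
end

section
/- Let $x \in \mathbb{R}$, $h > 0$, and let $f : \mathbb{R} \to \mathbb{R}$ be continuous on $[x, x+h]$. Then the function $(a,b) \mapsto \int_0^1 \bigl[f(x+uh) - a - b\,(x+uh)\bigr]^2\,du$ attains a minimum over $(a,b) \in \mathbb{R}^2$, and at any minimizer the slope is $$b = \frac{6}{h}\int_0^1 f(x+hu)\,(2u-1)\,du.$$ -/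
open Real Filter intervalIntegral

lemma stmt19_key (g : ℝ → ℝ) (hg : ContinuousOn g (Set.uIcc (0:ℝ) 1)) (c d : ℝ) :
    ∫ u in (0:ℝ)..1, (g u - c - d*u)^2 =
      (∫ u in (0:ℝ)..1, (g u)^2) - 2*c*(∫ u in (0:ℝ)..1, g u)
        - 2*d*(∫ u in (0:ℝ)..1, g u * u) + (c^2 + c*d + d^2/3) := by
  have hgi : IntervalIntegrable g MeasureTheory.volume 0 1 := hg.intervalIntegrable
  have hg2 : IntervalIntegrable (fun u => (g u)^2) MeasureTheory.volume 0 1 :=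
    (hg.pow 2).intervalIntegrable
  have hgu : IntervalIntegrable (fun u => g u * u) MeasureTheory.volume 0 1 :=
    (hg.mul continuousOn_id).intervalIntegrable
  have hB : IntervalIntegrable (fun u => 2*c * g u) MeasureTheory.volume 0 1 :=
    hgi.const_mul _
  have hC : IntervalIntegrable (fun u => 2*d * (g u * u)) MeasureTheory.volume 0 1 :=
    hgu.const_mul _
  have hpoly : IntervalIntegrable (fun u => (c + d*u)^2) MeasureTheory.volume 0 1 := by
    apply Continuous.intervalIntegrable; continuity
  have h1 : Set.EqOn (fun u => (g u - c - d*u)^2)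
      (fun u => ((g u)^2 - 2*c * g u - 2*d * (g u * u)) + (c + d*u)^2)
      (Set.uIcc (0:ℝ) 1) := fun u _ => by simp; ring
  rw [integral_congr h1, integral_add ((hg2.sub hB).sub hC) hpoly,
    integral_sub (hg2.sub hB) hC, integral_sub hg2 hB,
    integral_const_mul, integral_const_mul]
  have h2 : ∫ u in (0:ℝ)..1, (c + d*u)^2 = c^2 + c*d + d^2/3 := by
    have h3 : Set.EqOn (fun u => (c + d*u)^2) (fun u:ℝ => c^2 + (2*c*d)*u + d^2*u^2)
        (Set.uIcc (0:ℝ) 1) := fun u _ => by ring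
    rw [integral_congr h3,
      integral_add (by apply Continuous.intervalIntegrable; continuity)
        (by apply Continuous.intervalIntegrable; continuity),
      integral_add (by apply Continuous.intervalIntegrable; continuity)
        (by apply Continuous.intervalIntegrable; continuity),
      integral_const_mul, integral_const_mul, integral_id]
    simp [integral_pow]
    ring
  rw [h2]

theorem stmt19 (x h : ℝ) (hh : 0 < h) (f : ℝ → ℝ)
    (hf : ContinuousOn f (Set.Icc x (x + h))) :
    let F : ℝ × ℝ → ℝ := fun p =>
      ∫ u in (0:ℝ)..1, (f (x + u*h) - p.1 - p.2 * (x + u*h))^2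
    (∃ p : ℝ × ℝ, ∀ q : ℝ × ℝ, F p ≤ F q) ∧
      ∀ a b : ℝ, (∀ q : ℝ × ℝ, F (a, b) ≤ F q) →
        b = (6 / h) * ∫ u in (0:ℝ)..1, f (x + h*u) * (2*u - 1) := by
  intro F
  set g : ℝ → ℝ := fun u => f (x + u*h) with hgdef
  have hg : ContinuousOn g (Set.uIcc (0:ℝ) 1) := by
    rw [Set.uIcc_of_le (by norm_num)]
    apply hf.comp ((continuous_const.add (continuous_id.mul continuous_const)).continuousOn)
    intro u hu
    simp only [Set.mem_Icc, id_eq, Pi.add_apply, Pi.mul_apply] at *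
    constructor
    · nlinarith [hu.1, hu.2]
    · nlinarith [hu.1, hu.2]
  set I0 : ℝ := ∫ u in (0:ℝ)..1, g u with hI0
  set I1 : ℝ := ∫ u in (0:ℝ)..1, g u * u with hI1
  set I2 : ℝ := ∫ u in (0:ℝ)..1, (g u)^2 with hI2
  have hF : ∀ p : ℝ × ℝ, F p = I2 - 2*(p.1+p.2*x)*I0 - 2*(p.2*h)*I1
      + ((p.1+p.2*x)^2 + (p.1+p.2*x)*(p.2*h) + (p.2*h)^2/3) := by
    intro p
    rw [← stmt19_key g hg (p.1+p.2*x) (p.2*h)]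
    apply integral_congr
    intro u _
    simp only [hgdef]
    ring
  set b' : ℝ := 12*I1 - 6*I0 with hb'
  set a' : ℝ := 4*I0 - 6*I1 with ha'
  have hmin : ∀ q : ℝ × ℝ, F (a' - (b'/h)*x, b'/h) ≤ F q := by
    intro q
    rw [hF, hF]
    have e1 : (a' - (b'/h)*x) + (b'/h)*x = a' := by ring
    have e2 : (b'/h)*h = b' := by field_simp
    simp only [e1, e2]
    rw [ha', hb']
    nlinarith [sq_nonneg (q.1 + q.2*x - (4*I0 - 6*I1) + (q.2*h - (12*I1 - 6*I0))/2),
      sq_nonneg (q.2*h - (12*I1 - 6*I0))]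
  constructor
  · exact ⟨_, hmin⟩
  · intro a b hb
    have h1 : F (a, b) = F (a' - (b'/h)*x, b'/h) :=
      le_antisymm (hb _) (hmin _)
    rw [hF, hF] at h1
    have e1 : (a' - (b'/h)*x) + (b'/h)*x = a' := by ring
    have e2 : (b'/h)*h = b' := by field_simp
    simp only [e1, e2] at h1
    rw [ha', hb'] at h1
    have hd : b*h = b' := by
      rw [hb']
      have h2 : (b*h - (12*I1 - 6*I0))^2 ≤ 0 := by
        nlinarith [sq_nonneg (a + b*x - (4*I0 - 6*I1) + (b*h - (12*I1 - 6*I0))/2)]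
      have h3 : (b*h - b')^2 = 0 := le_antisymm h2 (sq_nonneg _)
      have := pow_eq_zero_iff (n := 2) (by norm_num) |>.mp h3
      linarith
    have htar : (∫ u in (0:ℝ)..1, f (x + h*u) * (2*u - 1)) = 2*I1 - I0 := by
      have heq : Set.EqOn (fun u => f (x + h*u) * (2*u - 1))
          (fun u => 2*(g u * u) - g u) (Set.uIcc (0:ℝ) 1) := by
        intro u _
        simp only [hgdef]
        rw [mul_comm h u]
        ring
      have hgu : IntervalIntegrable (fun u => g u * u) MeasureTheory.volume 0 1 :=
        (hg.mul continuousOn_id).intervalIntegrable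
      rw [integral_congr heq, integral_sub (hgu.const_mul 2) hg.intervalIntegrable,
        integral_const_mul]
    rw [htar]
    field_simp
    linarith [hd]
end
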